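/- For every q ≥ 0 one has L_{ξ,1}(q) = min{ L_{x_n}(q) : 0 ≤ n < s }, where x_n = (Q_n, P_n) are the convergent points of ξ. -/

import Mathlib

open Pointwise

/-- Distance from a real number to the nearest integer. -/
noncomputable def nearestInt (ξ : ℝ) : ℝ := sInf (Set.range fun m : ℤ => |ξ - (m : ℝ)|)

/-- The convex body `C_ξ(e^q) = {(x,y) : |x| ≤ e^q, |xξ - y| ≤ e^{-q}}`. -/
def body (ξ q : ℝ) : Set (ℝ × ℝ) :=
  {p : ℝ × ℝ | |p.1| ≤ Real.exp q ∧ |p.1 * ξ - p.2| ≤ Real.exp (-q)}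

/-- The `j`-th successive minimum of `C_ξ(e^q)` with respect to the lattice `ℤ²`:
the smallest `λ ≥ 0` such that `λ • C_ξ(e^q)` contains at least `j` linearly
independent points of `ℤ²`. -/
noncomputable def lam (ξ q : ℝ) (j : ℕ) : ℝ :=
  sInf {l : ℝ | 0 ≤ l ∧ ∃ v : Fin j → ℤ × ℤ,
    LinearIndependent ℝ (fun i => ((((v i).1 : ℝ)), (((v i).2 : ℝ)))) ∧
    ∀ i, ((((v i).1 : ℝ)), (((v i).2 : ℝ))) ∈ l • body ξ q}

/-- `L_{ξ,j}(q) = log λ_j(C_ξ(e^q))`. -/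
noncomputable def LL (ξ : ℝ) (j : ℕ) (q : ℝ) : ℝ := Real.log (lam ξ q j)

/-- `L_x(q)`: the logarithm of the smallest `λ ≥ 0` with `x ∈ λ • C_ξ(e^q)`, namely
`log (max (|Q| e^{-q}) (|Qξ - P| e^q))`, which equals
`max (log |Q| - q) (log |Qξ - P| + q)` (the first term being omitted when `Q = 0`,
the second when `Qξ - P = 0`). -/
noncomputable def Lx (ξ : ℝ) (x : ℤ × ℤ) (q : ℝ) : ℝ :=
  Real.log (max (|(x.1 : ℝ)| * Real.exp (-q)) (|(x.1 : ℝ) * ξ - (x.2 : ℝ)| * Real.exp q))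

/-- Data of a real number `ξ ∈ [0,1/2]` together with its simple continued fraction
expansion `ξ = [0; a 1, a 2, …]`, with partial quotients `a n ≥ 1` for `1 ≤ n < s`,
where `s ∈ ℕ* ∪ {∞}` (encoded in `WithTop ℤ`), `a (s-1) ≥ 2` if `2 ≤ s < ∞`
(`s = 1` meaning `ξ = 0`), and with `Q`, `P` the denominators and numerators of its
convergents, given by the standard recurrences with initial values
`P (-1) = Q 0 = 1`, `P 0 = Q (-1) = 0`.  The fact that `[0; a 1, a 2, …]` is indeed
the continued fraction expansion of `ξ` is recorded through the value conditions
`hfin` (if `s < ∞` then `ξ = P (s-1) / Q (s-1)`) and `hinf` (if `s = ∞` then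
`P n / Q n → ξ`), which, given the constraints on the `a n`, characterize it. -/
structure CFData where
  ξ : ℝ
  s : WithTop ℤ
  a : ℤ → ℤ
  Q : ℤ → ℤ
  P : ℤ → ℤ
  hξ0 : 0 ≤ ξ
  hξhalf : ξ ≤ 1 / 2
  hs : 1 ≤ s
  ha : ∀ n : ℤ, 1 ≤ n → (n : WithTop ℤ) < s → 1 ≤ a n
  halast : ∀ n : ℤ, 2 ≤ n → (n : WithTop ℤ) = s → 2 ≤ a (n - 1)
  hQ0 : Q 0 = 1
  hQneg : Q (-1) = 0
  hP0 : P 0 = 0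
  hPneg : P (-1) = 1
  hQrec : ∀ n : ℤ, 1 ≤ n → (n : WithTop ℤ) < s → Q n = Q (n - 2) + a n * Q (n - 1)
  hPrec : ∀ n : ℤ, 1 ≤ n → (n : WithTop ℤ) < s → P n = P (n - 2) + a n * P (n - 1)
  hfin : ∀ k : ℤ, (k : WithTop ℤ) = s → ξ = (P (k - 1) : ℝ) / (Q (k - 1) : ℝ)
  hinf : s = ⊤ → Filter.Tendsto (fun n : ℕ => (P (n : ℤ) : ℝ) / (Q (n : ℤ) : ℝ))
      Filter.atTop (nhds ξ)

namespace CFData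

/-- `Δ n = |Q n • ξ - P n|`. -/
noncomputable def Δ (c : CFData) (n : ℤ) : ℝ := |(c.Q n : ℝ) * c.ξ - (c.P n : ℝ)|

/-- `Q (n,t) = Q (n-2) + t * Q (n-1)`. -/
def Qt (c : CFData) (n t : ℤ) : ℤ := c.Q (n - 2) + t * c.Q (n - 1)

/-- `P (n,t) = P (n-2) + t * P (n-1)`. -/
def Pt (c : CFData) (n t : ℤ) : ℤ := c.P (n - 2) + t * c.P (n - 1)

/-- `Δ (n,t) = |Q (n,t) • ξ - P (n,t)|`. -/
noncomputable def Δt (c : CFData) (n t : ℤ) : ℝ := |(c.Qt n t : ℝ) * c.ξ - (c.Pt n t : ℝ)|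

/-- `q n = (log (Q n) - log (Δ (n-1))) / 2`; in particular `q 0 = 0`. -/
noncomputable def qcrit (c : CFData) (n : ℤ) : ℝ :=
  (Real.log (c.Q n : ℝ) - Real.log (c.Δ (n - 1))) / 2

end CFData

lemma cf12_lt_s (c : CFData) {m n : ℤ} (h : m ≤ n) (hn : (n : WithTop ℤ) < c.s) :
    (m : WithTop ℤ) < c.s := by
  rcases eq_or_lt_of_le h with rfl | h
  · exact hn
  · exact lt_trans (WithTop.coe_lt_coe.2 h) hn

lemma cf12_growth (c : CFData) : ∀ n : ℤ, 0 ≤ n → (n : WithTop ℤ) < c.s →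
    0 ≤ c.Q (n-1) ∧ c.Q (n-1) ≤ c.Q n ∧ 1 ≤ c.Q n ∧ n + 1 ≤ 2 * c.Q n ∧
      (1 ≤ n → 1 ≤ c.Q (n-1)) := by
  intro n hn
  refine Int.le_induction (motive := fun n _ => (n : WithTop ℤ) < c.s →
    0 ≤ c.Q (n-1) ∧ c.Q (n-1) ≤ c.Q n ∧ 1 ≤ c.Q n ∧ n + 1 ≤ 2 * c.Q n ∧
      (1 ≤ n → 1 ≤ c.Q (n-1))) ?_ ?_ n hn
  · intro _; norm_num [c.hQ0, c.hQneg]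
  · intro n hn IH hlt
    have hns : (n : WithTop ℤ) < c.s := cf12_lt_s c (by omega) hlt
    obtain ⟨h0, h1, h2, h3, h4⟩ := IH hns
    have hrec := c.hQrec (n+1) (by omega) hlt
    rw [show n+1-2 = n-1 by ring, show n+1-1 = n by ring] at hrec
    have ha1 := c.ha (n+1) (by omega) hlt
    have hAQ : c.Q n ≤ c.a (n+1) * c.Q n := le_mul_of_one_le_left (by omega) ha1
    rw [show n+1-1 = n by ring]
    refine ⟨by omega, by omega, by omega, ?_, fun _ => by omega⟩
    by_cases hn1 : 1 ≤ n
    · have := h4 hn1; omega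
    · have hn0 : n = 0 := by omega
      subst hn0
      simp only [c.hQneg, c.hQ0] at *
      omega

lemma cf12_det (c : CFData) : ∀ n : ℤ, 0 ≤ n → (n : WithTop ℤ) < c.s →
    c.Q (n-1) * c.P n - c.Q n * c.P (n-1) = 1 ∨
      c.Q (n-1) * c.P n - c.Q n * c.P (n-1) = -1 := by
  intro n hn
  refine Int.le_induction (motive := fun n _ => (n : WithTop ℤ) < c.s →
    c.Q (n-1) * c.P n - c.Q n * c.P (n-1) = 1 ∨
      c.Q (n-1) * c.P n - c.Q n * c.P (n-1) = -1) ?_ ?_ n hn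
  · intro _; right; norm_num [c.hQ0, c.hQneg, c.hP0, c.hPneg]
  · intro n hn IH hlt
    have hns : (n : WithTop ℤ) < c.s := cf12_lt_s c (by omega) hlt
    have hq := c.hQrec (n+1) (by omega) hlt
    have hp := c.hPrec (n+1) (by omega) hlt
    rw [show n+1-2 = n-1 by ring, show n+1-1 = n by ring] at hq hp
    have key : c.Q (n+1-1) * c.P (n+1) - c.Q (n+1) * c.P (n+1-1)
        = -(c.Q (n-1) * c.P n - c.Q n * c.P (n-1)) := by
      rw [show n+1-1 = n by ring, hq, hp]; ring
    rcases IH hns with h | h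
    · right; rw [key, h]
    · left; rw [key, h]; ring

noncomputable def cf12_e (c : CFData) (n : ℤ) : ℝ := (c.Q n : ℝ) * c.ξ - (c.P n : ℝ)

lemma cf12_efin (c : CFData) {k : ℤ} (hk1 : 1 ≤ k) (hk : (k : WithTop ℤ) = c.s) :
    cf12_e c (k-1) = 0 := by
  have hks : ((k-1 : ℤ) : WithTop ℤ) < c.s := by
    rw [← hk]; exact WithTop.coe_lt_coe.2 (by omega)
  have hQ := (cf12_growth c (k-1) (by omega) hks).2.2.1
  have hQR : (0:ℝ) < (c.Q (k-1) : ℝ) := by exact_mod_cast hQ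
  have hξ := c.hfin k hk
  simp only [cf12_e, hξ]
  field_simp
  ring

lemma cf12_sign (c : CFData) {n : ℤ} (h0n : 0 ≤ n)
    (h1 : ((n+1 : ℤ) : WithTop ℤ) < c.s) :
    cf12_e c n * cf12_e c (n+1) ≤ 0 := by
  by_contra hcon
  push_neg at hcon
  have hns : (n : WithTop ℤ) < c.s := cf12_lt_s c (by omega) h1
  obtain ⟨σ, hσ1, hen, hen1⟩ : ∃ σ : ℝ, (σ = 1 ∨ σ = -1) ∧
      0 < σ * cf12_e c n ∧ 0 < σ * cf12_e c (n+1) := by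
    rcases mul_pos_iff.1 hcon with ⟨ha, hb⟩ | ⟨ha, hb⟩
    · exact ⟨1, Or.inl rfl, by linarith, by linarith⟩
    · exact ⟨-1, Or.inr rfl, by linarith, by linarith⟩
  have hQn : (0:ℝ) < (c.Q n : ℝ) := by
    exact_mod_cast (cf12_growth c n h0n hns).2.2.1
  have hQn1 : (0:ℝ) < (c.Q (n+1) : ℝ) := by
    exact_mod_cast (cf12_growth c (n+1) (by omega) h1).2.2.1
  set ρ : ℝ := min ((σ * cf12_e c n) / (c.Q n : ℝ)) ((σ * cf12_e c (n+1)) / (c.Q (n+1) : ℝ)) with hρdef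
  have hρ : 0 < ρ := lt_min (div_pos hen hQn) (div_pos hen1 hQn1)
  -- main claim
  have claim : ∀ m : ℤ, n ≤ m →
      (((m : ℤ) : WithTop ℤ) < c.s → ρ * (c.Q m : ℝ) ≤ σ * cf12_e c m) ∧
      (((m+1 : ℤ) : WithTop ℤ) < c.s → ρ * (c.Q (m+1) : ℝ) ≤ σ * cf12_e c (m+1)) := by
    intro m hm
    refine Int.le_induction (motive := fun m _ =>
      (((m : ℤ) : WithTop ℤ) < c.s → ρ * (c.Q m : ℝ) ≤ σ * cf12_e c m) ∧
      (((m+1 : ℤ) : WithTop ℤ) < c.s → ρ * (c.Q (m+1) : ℝ) ≤ σ * cf12_e c (m+1))) ?_ ?_ m hm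
    · constructor
      · intro _
        exact (le_div_iff₀ hQn).1 (min_le_left _ _)
      · intro _
        exact (le_div_iff₀ hQn1).1 (min_le_right _ _)
    · rintro m hnm ⟨IH1, IH2⟩
      refine ⟨IH2, ?_⟩
      rw [show m+1+1 = m+2 by ring]
      intro h2
      have hm1s : ((m+1 : ℤ) : WithTop ℤ) < c.s := cf12_lt_s c (by omega) h2
      have hms : ((m : ℤ) : WithTop ℤ) < c.s := cf12_lt_s c (by omega) h2
      have hQm := (cf12_growth c m (by omega) hms).2.2.1
      have hQm1 := (cf12_growth c (m+1) (by omega) hm1s).2.2.1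
      have hA := c.ha (m+2) (by omega) h2
      have hAR : (1:ℝ) ≤ (c.a (m+2) : ℝ) := by exact_mod_cast hA
      have hq := c.hQrec (m+2) (by omega) h2
      have hp := c.hPrec (m+2) (by omega) h2
      rw [show m+2-2 = m by ring, show m+2-1 = m+1 by ring] at hq hp
      have hqR : (c.Q (m+2) : ℝ) = (c.Q m : ℝ) + (c.a (m+2) : ℝ) * (c.Q (m+1) : ℝ) := by
        exact_mod_cast congrArg (fun z : ℤ => (z : ℝ)) hq
      have heR : cf12_e c (m+2) = cf12_e c m + (c.a (m+2) : ℝ) * cf12_e c (m+1) := by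
        simp only [cf12_e, hqR]
        have hpR : (c.P (m+2) : ℝ) = (c.P m : ℝ) + (c.a (m+2) : ℝ) * (c.P (m+1) : ℝ) := by
          exact_mod_cast congrArg (fun z : ℤ => (z : ℝ)) hp
        rw [hpR]; ring
      have key := mul_le_mul_of_nonneg_left (IH2 hm1s) (by linarith : (0:ℝ) ≤ (c.a (m+2) : ℝ))
      rw [hqR, heR]
      have h1' := IH1 hms
      nlinarith [key, h1']
  -- contradiction
  by_cases hT : c.s = ⊤
  · have ht := c.hinf hT
    obtain ⟨N, hN⟩ := Metric.tendsto_atTop.mp ht ρ hρ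
    set m0 : ℕ := max N n.toNat with hm0
    have hm0n : n ≤ (m0 : ℤ) := by
      have h1' : n.toNat ≤ m0 := le_max_right _ _
      omega
    have hdist := hN m0 (le_max_left _ _)
    have hms : ((m0 : ℤ) : WithTop ℤ) < c.s := by rw [hT]; exact WithTop.coe_lt_top _
    have hcl := (claim (m0 : ℤ) hm0n).1 hms
    have hQ : (0:ℝ) < (c.Q (m0 : ℤ) : ℝ) := by
      exact_mod_cast (cf12_growth c (m0:ℤ) (by omega) hms).2.2.1
    have hre : (c.P (m0:ℤ) : ℝ) / (c.Q (m0:ℤ) : ℝ) - c.ξ = -(cf12_e c (m0:ℤ)) / (c.Q (m0:ℤ) : ℝ) := by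
      field_simp [cf12_e]
      simp only [cf12_e]; ring
    have habs : |(c.P (m0:ℤ) : ℝ) / (c.Q (m0:ℤ) : ℝ) - c.ξ| = |cf12_e c (m0:ℤ)| / (c.Q (m0:ℤ) : ℝ) := by
      rw [hre, abs_div, abs_neg, abs_of_pos hQ]
    have hσe : σ * cf12_e c (m0:ℤ) ≤ |cf12_e c (m0:ℤ)| := by
      rcases hσ1 with rfl | rfl
      · rw [one_mul]; exact le_abs_self _
      · rw [neg_one_mul]; exact neg_le_abs _
    rw [Real.dist_eq, habs] at hdist
    have : ρ * (c.Q (m0:ℤ) : ℝ) ≤ |cf12_e c (m0:ℤ)| := le_trans hcl hσe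
    have : |cf12_e c (m0:ℤ)| < ρ * (c.Q (m0:ℤ) : ℝ) := by
      rw [div_lt_iff₀ hQ] at hdist; linarith [hdist]
    linarith
  · obtain ⟨k, hk⟩ := WithTop.ne_top_iff_exists.1 hT
    have hnk : n + 1 < k := by
      rw [← hk] at h1
      exact_mod_cast h1
    have hkm : ((k-1 : ℤ) : WithTop ℤ) < c.s := by
      rw [← hk]; exact WithTop.coe_lt_coe.2 (by omega)
    have hcl := (claim (k-1) (by omega)).1 hkm
    have he0 := cf12_efin c (by omega : 1 ≤ k) hk
    rw [he0, mul_zero] at hcl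
    have hQ : (0:ℝ) < (c.Q (k-1) : ℝ) := by
      exact_mod_cast (cf12_growth c (k-1) (by omega) hkm).2.2.1
    nlinarith

noncomputable def cf12_F (c : CFData) (q : ℝ) (x : ℤ × ℤ) : ℝ :=
  max (|(x.1 : ℝ)| * Real.exp (-q)) (|(x.1 : ℝ) * c.ξ - (x.2 : ℝ)| * Real.exp q)

lemma cf12_F_nonneg (c : CFData) (q : ℝ) (x : ℤ × ℤ) : 0 ≤ cf12_F c q x :=
  le_max_of_le_left (by positivity)

lemma cf12_abs_aux {a b : ℝ} (h : 0 ≤ a * b) : |a| ≤ |a + b| := by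
  rcases le_or_gt 0 a with ha | ha
  · rcases le_or_gt 0 b with hb | hb
    · rw [abs_of_nonneg ha, abs_of_nonneg (by linarith)]; linarith
    · have ha0 : a = 0 := by nlinarith
      simp [ha0]
  · rcases le_or_gt 0 b with hb | hb
    · have hb0 : b = 0 := by nlinarith
      simp [hb0]
    · rw [abs_of_neg ha, abs_of_neg (by linarith)]; linarith

lemma cf12_greatest (c : CFData) {M : ℤ} (hM : 1 ≤ M) :
    ∃ n : ℤ, (0 ≤ n ∧ (n : WithTop ℤ) < c.s ∧ c.Q n ≤ M) ∧
      ∀ z : ℤ, (0 ≤ z ∧ (z : WithTop ℤ) < c.s ∧ c.Q z ≤ M) → z ≤ n := by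
  apply Int.exists_greatest_of_bdd
  · refine ⟨2 * M, ?_⟩
    rintro z ⟨hz0, hzs, hzM⟩
    have := (cf12_growth c z hz0 hzs).2.2.2.1
    omega
  · refine ⟨0, le_refl _, ?_, by rw [c.hQ0]; exact hM⟩
    have h01 : ((0:ℤ) : WithTop ℤ) < (1 : WithTop ℤ) := by
      exact_mod_cast (by norm_num : (0:ℤ) < 1)
    exact lt_of_lt_of_le h01 c.hs

lemma cf12_key (c : CFData) (q : ℝ) (hq : 0 ≤ q) (x : ℤ × ℤ) (hx : x ≠ 0) :
    ∃ n : ℤ, 0 ≤ n ∧ (n : WithTop ℤ) < c.s ∧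
      cf12_F c q (c.Q n, c.P n) ≤ cf12_F c q x := by
  obtain ⟨Q, P⟩ := x
  have hexp : Real.exp (-q) ≤ Real.exp q := Real.exp_le_exp.2 (by linarith)
  have h0s : ((0:ℤ) : WithTop ℤ) < c.s := by
    have h01 : ((0:ℤ) : WithTop ℤ) < (1 : WithTop ℤ) := by
      exact_mod_cast (by norm_num : (0:ℤ) < 1)
    exact lt_of_lt_of_le h01 c.hs
  by_cases hQ0 : Q = 0
  · subst hQ0
    have hP : P ≠ 0 := by simpa [Prod.ext_iff] using hx
    have hP1 : (1:ℝ) ≤ |(P:ℝ)| := by exact_mod_cast Int.one_le_abs hP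
    refine ⟨0, le_refl _, h0s, ?_⟩
    simp only [cf12_F, c.hQ0, c.hP0]
    push_cast
    apply max_le
    · apply le_max_of_le_right
      have : |(1:ℝ)| * Real.exp (-q) ≤ 1 * Real.exp q := by
        rw [abs_one, one_mul, one_mul]; exact hexp
      calc |(1:ℝ)| * Real.exp (-q) ≤ 1 * Real.exp q := this
        _ ≤ |(P:ℝ)| * Real.exp q := by
            apply mul_le_mul_of_nonneg_right hP1 (Real.exp_pos q).le
        _ = |(0:ℝ) * c.ξ - (P:ℝ)| * Real.exp q := by rw [zero_mul, zero_sub, abs_neg]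
    · apply le_max_of_le_right
      have h1 : |(1:ℝ) * c.ξ - 0| ≤ |(P:ℝ)| := by
        rw [one_mul, sub_zero, abs_of_nonneg c.hξ0]
        linarith [c.hξhalf]
      calc |(1:ℝ) * c.ξ - 0| * Real.exp q ≤ |(P:ℝ)| * Real.exp q := by
            apply mul_le_mul_of_nonneg_right h1 (Real.exp_pos q).le
        _ = |(0:ℝ) * c.ξ - (P:ℝ)| * Real.exp q := by rw [zero_mul, zero_sub, abs_neg]
  · -- Q ≠ 0
    set M : ℤ := |Q| with hM
    have hM1 : 1 ≤ M := Int.one_le_abs hQ0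
    obtain ⟨n, ⟨hn0, hns, hnM⟩, hmax⟩ := cf12_greatest c hM1
    have hQnR : (1:ℝ) ≤ (c.Q n : ℝ) := by
      exact_mod_cast (cf12_growth c n hn0 hns).2.2.1
    have hQabs : |(c.Q n : ℝ)| ≤ |(Q:ℝ)| := by
      rw [abs_of_nonneg (by linarith : (0:ℝ) ≤ (c.Q n : ℝ))]
      have : (c.Q n : ℝ) ≤ (M : ℝ) := by exact_mod_cast hnM
      rw [hM] at this; push_cast at this; exact this
    have hfirst : |(c.Q n : ℝ)| * Real.exp (-q) ≤ cf12_F c q (Q, P) := by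
      apply le_max_of_le_left
      exact mul_le_mul_of_nonneg_right hQabs (Real.exp_pos _).le
    by_cases hnext : ((n+1 : ℤ) : WithTop ℤ) < c.s
    · -- decomposition case
      have hMQ1 : M < c.Q (n+1) := by
        by_contra hcon
        push_neg at hcon
        have := hmax (n+1) ⟨by omega, hnext, hcon⟩
        omega
      have hd := cf12_det c (n+1) (by omega) hnext
      rw [show n+1-1 = n by ring] at hd
      set D : ℤ := c.Q n * c.P (n+1) - c.Q (n+1) * c.P n with hD
      have hD2 : D * D = 1 := by rcases hd with h | h <;> rw [h] <;> ring
      obtain ⟨u, v, hu, hp⟩ : ∃ u v : ℤ,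
          u * c.Q n + v * c.Q (n+1) = Q ∧ u * c.P n + v * c.P (n+1) = P :=
        ⟨D * (Q * c.P (n+1) - P * c.Q (n+1)), D * (P * c.Q n - Q * c.P n),
          by rw [hD]; linear_combination Q * hD2, by rw [hD]; linear_combination P * hD2⟩
      have heD : (Q:ℝ) * c.ξ - (P:ℝ) = (u:ℝ) * cf12_e c n + (v:ℝ) * cf12_e c (n+1) := by
        have huR : ((u:ℝ) * (c.Q n : ℝ) + (v:ℝ) * (c.Q (n+1) : ℝ)) = (Q:ℝ) := by
          exact_mod_cast congrArg (fun z : ℤ => (z:ℝ)) hu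
        have hpR : ((u:ℝ) * (c.P n : ℝ) + (v:ℝ) * (c.P (n+1) : ℝ)) = (P:ℝ) := by
          exact_mod_cast congrArg (fun z : ℤ => (z:ℝ)) hp
        rw [← huR, ← hpR]; simp only [cf12_e]; ring
      have hQn1Z : 1 ≤ c.Q (n+1) := (cf12_growth c (n+1) (by omega) hnext).2.2.1
      have hQnZ : 1 ≤ c.Q n := (cf12_growth c n hn0 hns).2.2.1
      by_cases hv : v = 0
      · -- x = u * x_n
        have hu0 : u ≠ 0 := by
          intro h; rw [h, hv] at hu; simp at hu; exact hQ0 hu.symm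
        have hu1 : (1:ℝ) ≤ |(u:ℝ)| := by exact_mod_cast Int.one_le_abs hu0
        have habs : |cf12_e c n| ≤ |(Q:ℝ) * c.ξ - (P:ℝ)| := by
          rw [heD, hv]
          push_cast
          rw [zero_mul, add_zero, abs_mul]
          nlinarith [abs_nonneg (cf12_e c n)]
        refine ⟨n, hn0, hns, max_le hfirst ?_⟩
        apply le_max_of_le_right
        simp only [cf12_e] at habs
        exact mul_le_mul_of_nonneg_right habs (Real.exp_pos _).le
      · by_cases hu0 : u = 0
        · -- |Q| ≥ Q(n+1) > M, contradiction
          exfalso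
          rw [hu0] at hu
          simp only [zero_mul, zero_add] at hu
          have hv1 : 1 ≤ |v| := Int.one_le_abs hv
          have : |Q| = |v| * c.Q (n+1) := by
            rw [← hu, abs_mul, abs_of_nonneg (by omega : (0:ℤ) ≤ c.Q (n+1))]
          nlinarith
        · rcases lt_trichotomy (u * v) 0 with huv | huv | huv
          · -- opposite signs: the good case
            have hsign := cf12_sign c hn0 hnext
            have hprod : 0 ≤ ((u:ℝ) * cf12_e c n) * ((v:ℝ) * cf12_e c (n+1)) := by
              have huvR : ((u:ℝ) * (v:ℝ)) ≤ 0 := by exact_mod_cast le_of_lt huv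
              nlinarith
            have habs0 : |cf12_e c n| ≤ |(Q:ℝ) * c.ξ - (P:ℝ)| := by
              rw [heD]
              have h1 : |(u:ℝ) * cf12_e c n| ≤ |(u:ℝ) * cf12_e c n + (v:ℝ) * cf12_e c (n+1)| :=
                cf12_abs_aux hprod
              have hu1 : (1:ℝ) ≤ |(u:ℝ)| := by exact_mod_cast Int.one_le_abs hu0
              rw [abs_mul] at h1
              nlinarith [abs_nonneg (cf12_e c n)]
            refine ⟨n, hn0, hns, max_le hfirst ?_⟩
            apply le_max_of_le_right
            simp only [cf12_e] at habs0
            exact mul_le_mul_of_nonneg_right habs0 (Real.exp_pos _).le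
          · exact absurd (mul_eq_zero.1 huv) (by push_neg; exact ⟨hu0, hv⟩)
          · -- same signs: contradiction
            exfalso
            rcases mul_pos_iff.1 huv with ⟨hup, hvp⟩ | ⟨hun, hvn⟩
            · have h1 : c.Q n ≤ u * c.Q n := le_mul_of_one_le_left (by omega) (by omega)
              have h2 : c.Q (n+1) ≤ v * c.Q (n+1) := le_mul_of_one_le_left (by omega) (by omega)
              have : M < Q := by omega
              have : Q ≤ |Q| := le_abs_self Q
              omega
            · have h1 : u * c.Q n ≤ -(c.Q n) := by nlinarith
              have h2 : v * c.Q (n+1) ≤ -(c.Q (n+1)) := by nlinarith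
              have : -Q ≤ |Q| := neg_le_abs Q
              omega
    · -- n is the last index: e n = 0
      have hsn : c.s ≤ ((n+1 : ℤ) : WithTop ℤ) := not_lt.1 hnext
      have hsT : c.s ≠ ⊤ := by
        intro h; rw [h] at hsn; exact absurd hsn (WithTop.coe_lt_top _).not_ge
      obtain ⟨k, hk⟩ := WithTop.ne_top_iff_exists.1 hsT
      have hkeq : k = n + 1 := by
        rw [← hk] at hsn hns
        have h1 : k ≤ n+1 := by exact_mod_cast hsn
        have h2 : n < k := by exact_mod_cast hns
        omega
      have he0 : cf12_e c n = 0 := by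
        have := cf12_efin c (by omega : 1 ≤ k) hk
        rwa [hkeq, show n+1-1 = n by ring] at this
      refine ⟨n, hn0, hns, max_le hfirst ?_⟩
      simp only [cf12_e] at he0
      rw [he0, abs_zero, zero_mul]
      exact cf12_F_nonneg c q _

lemma cf12_minaux (c : CFData) (q : ℝ) : ∀ N : ℕ, ∃ n₀ : ℤ, 0 ≤ n₀ ∧ (n₀ : WithTop ℤ) < c.s ∧
    ∀ n : ℤ, 0 ≤ n → (n : WithTop ℤ) < c.s → n ≤ (N : ℤ) →
      cf12_F c q (c.Q n₀, c.P n₀) ≤ cf12_F c q (c.Q n, c.P n) := by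
  have h0s : ((0:ℤ) : WithTop ℤ) < c.s := by
    have h01 : ((0:ℤ) : WithTop ℤ) < (1 : WithTop ℤ) := by
      exact_mod_cast (by norm_num : (0:ℤ) < 1)
    exact lt_of_lt_of_le h01 c.hs
  intro N
  induction N with
  | zero =>
    refine ⟨0, le_refl _, h0s, ?_⟩
    intro n hn0 _ hnN
    have : n = 0 := by omega
    subst this; exact le_refl _
  | succ N IH =>
    obtain ⟨n₀, h00, h0ss, hmin⟩ := IH
    by_cases hc : ((((N:ℤ)+1 : ℤ)) : WithTop ℤ) < c.s ∧
        cf12_F c q (c.Q ((N:ℤ)+1), c.P ((N:ℤ)+1)) < cf12_F c q (c.Q n₀, c.P n₀)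
    · refine ⟨(N:ℤ)+1, by omega, hc.1, ?_⟩
      intro n hn0 hns hnN
      rcases lt_or_eq_of_le hnN with h | h
      · have := hmin n hn0 hns (by push_cast at h ⊢; omega)
        linarith [hc.2]
      · rw [show n = (N:ℤ)+1 by push_cast at h; omega]
    · refine ⟨n₀, h00, h0ss, ?_⟩
      intro n hn0 hns hnN
      rcases lt_or_eq_of_le hnN with h | h
      · exact hmin n hn0 hns (by push_cast at h ⊢; omega)
      · have hn' : n = (N:ℤ)+1 := by push_cast at h; omega
        subst hn'
        push_neg at hc
        exact hc hns

lemma cf12_min (c : CFData) (q : ℝ) (hq : 0 ≤ q) : ∃ n₀ : ℤ, 0 ≤ n₀ ∧ (n₀ : WithTop ℤ) < c.s ∧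
    ∀ n : ℤ, 0 ≤ n → (n : WithTop ℤ) < c.s →
      cf12_F c q (c.Q n₀, c.P n₀) ≤ cf12_F c q (c.Q n, c.P n) := by
  set N : ℕ := ⌈2 * Real.exp (2*q)⌉₊ with hN
  obtain ⟨n₀, h00, h0s, hmin⟩ := cf12_minaux c q N
  have h0idx : ((0:ℤ) : WithTop ℤ) < c.s := by
    have h01 : ((0:ℤ) : WithTop ℤ) < (1 : WithTop ℤ) := by
      exact_mod_cast (by norm_num : (0:ℤ) < 1)
    exact lt_of_lt_of_le h01 c.hs
  have hF0 : cf12_F c q (c.Q 0, c.P 0) ≤ Real.exp q := by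
    simp only [cf12_F, c.hQ0, c.hP0]
    push_cast
    apply max_le
    · rw [abs_one, one_mul]; exact Real.exp_le_exp.2 (by linarith)
    · rw [one_mul, sub_zero, abs_of_nonneg c.hξ0]
      nlinarith [Real.exp_pos q, c.hξhalf, c.hξ0]
  refine ⟨n₀, h00, h0s, ?_⟩
  intro n hn0 hns
  rcases le_or_gt n (N:ℤ) with h | h
  · exact hmin n hn0 hns h
  · -- n is large : F n ≥ exp q ≥ F 0 ≥ F n₀
    have hmin0 := hmin 0 (le_refl _) h0idx (by positivity)
    have hQn : ((n:ℝ) + 1) ≤ 2 * (c.Q n : ℝ) := by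
      exact_mod_cast (cf12_growth c n hn0 hns).2.2.2.1
    have hNR : 2 * Real.exp (2*q) ≤ (N:ℝ) := Nat.le_ceil _
    have hnR : (N:ℝ) < (n:ℝ) := by exact_mod_cast h
    have hQbig : Real.exp (2*q) ≤ (c.Q n : ℝ) := by linarith
    have hQpos : (0:ℝ) < (c.Q n:ℝ) := lt_of_lt_of_le (Real.exp_pos _) hQbig
    have hexpq : Real.exp (2*q) * Real.exp (-q) = Real.exp q := by
      rw [← Real.exp_add]; ring_nf
    have hFn : Real.exp q ≤ cf12_F c q (c.Q n, c.P n) := by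
      apply le_max_of_le_left
      rw [abs_of_pos hQpos, ← hexpq]
      exact mul_le_mul_of_nonneg_right hQbig (Real.exp_pos _).le
    calc cf12_F c q (c.Q n₀, c.P n₀) ≤ cf12_F c q (c.Q 0, c.P 0) := hmin0
      _ ≤ Real.exp q := hF0
      _ ≤ cf12_F c q (c.Q n, c.P n) := hFn

lemma cf12_memsmul (c : CFData) (q : ℝ) {l : ℝ} (hl : 0 < l) (x : ℤ × ℤ) :
    (((x.1 : ℝ)), ((x.2 : ℝ))) ∈ l • body c.ξ q ↔ cf12_F c q x ≤ l := by
  have hmul : Real.exp q * Real.exp (-q) = 1 := by rw [← Real.exp_add]; simp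
  rw [Set.mem_smul_set_iff_inv_smul_mem₀ (ne_of_gt hl)]
  simp only [body, Set.mem_setOf_eq, Prod.smul_mk, smul_eq_mul]
  have h1 : |l⁻¹ * (x.1 : ℝ)| = |(x.1 : ℝ)| / l := by
    rw [abs_mul, abs_inv, abs_of_pos hl]; ring
  have h2 : |l⁻¹ * (x.1 : ℝ) * c.ξ - l⁻¹ * (x.2 : ℝ)| = |(x.1 : ℝ) * c.ξ - (x.2 : ℝ)| / l := by
    rw [show l⁻¹ * (x.1:ℝ) * c.ξ - l⁻¹ * (x.2:ℝ) = l⁻¹ * ((x.1:ℝ) * c.ξ - (x.2:ℝ)) by ring,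
      abs_mul, abs_inv, abs_of_pos hl]; ring
  rw [h1, h2, div_le_iff₀ hl, div_le_iff₀ hl, cf12_F, max_le_iff]
  constructor
  · rintro ⟨hA, hB⟩
    constructor
    · nlinarith [mul_le_mul_of_nonneg_right hA (Real.exp_pos (-q)).le, hmul,
        abs_nonneg (x.1:ℝ)]
    · nlinarith [mul_le_mul_of_nonneg_right hB (Real.exp_pos q).le, hmul,
        abs_nonneg ((x.1:ℝ) * c.ξ - (x.2:ℝ))]
  · rintro ⟨hA, hB⟩
    constructor
    · nlinarith [mul_le_mul_of_nonneg_right hA (Real.exp_pos q).le, hmul,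
        abs_nonneg (x.1:ℝ)]
    · nlinarith [mul_le_mul_of_nonneg_right hB (Real.exp_pos (-q)).le, hmul,
        abs_nonneg ((x.1:ℝ) * c.ξ - (x.2:ℝ))]

theorem stmt12 (c : CFData) (q : ℝ) (hq : 0 ≤ q) :
    IsLeast {v : ℝ | ∃ n : ℤ, 0 ≤ n ∧ (n : WithTop ℤ) < c.s ∧
      v = Lx c.ξ (c.Q n, c.P n) q} (LL c.ξ 1 q) := by
  obtain ⟨n₀, h00, h0s, hmin⟩ := cf12_min c q hq
  have hQn₀ : (1:ℝ) ≤ (c.Q n₀ : ℝ) := by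
    exact_mod_cast (cf12_growth c n₀ h00 h0s).2.2.1
  have habs1 : (1:ℝ) ≤ |(c.Q n₀ : ℝ)| := le_trans hQn₀ (le_abs_self _)
  have hF₀pos : 0 < cf12_F c q (c.Q n₀, c.P n₀) := by
    apply lt_of_lt_of_le (Real.exp_pos (-q))
    apply le_max_of_le_left
    nlinarith [Real.exp_pos (-q)]
  have hpairne : ((((c.Q n₀, c.P n₀) : ℤ × ℤ).1 : ℝ), (((c.Q n₀, c.P n₀) : ℤ × ℤ).2 : ℝ))
      ≠ (0 : ℝ × ℝ) := by
    intro h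
    have h1 : ((c.Q n₀ : ℝ)) = 0 := congrArg Prod.fst h
    rw [h1, abs_zero] at habs1; linarith
  have hmem : cf12_F c q (c.Q n₀, c.P n₀) ∈ {l : ℝ | 0 ≤ l ∧ ∃ v : Fin 1 → ℤ × ℤ,
      LinearIndependent ℝ (fun i => ((((v i).1 : ℝ)), (((v i).2 : ℝ)))) ∧
      ∀ i, ((((v i).1 : ℝ)), (((v i).2 : ℝ))) ∈ l • body c.ξ q} := by
    refine ⟨le_of_lt hF₀pos, fun _ => (c.Q n₀, c.P n₀), ?_, ?_⟩
    · rw [linearIndependent_unique_iff]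
      exact hpairne
    · intro i
      exact (cf12_memsmul c q hF₀pos _).2 (le_refl _)
  have hlow : ∀ l ∈ {l : ℝ | 0 ≤ l ∧ ∃ v : Fin 1 → ℤ × ℤ,
      LinearIndependent ℝ (fun i => ((((v i).1 : ℝ)), (((v i).2 : ℝ)))) ∧
      ∀ i, ((((v i).1 : ℝ)), (((v i).2 : ℝ))) ∈ l • body c.ξ q},
      cf12_F c q (c.Q n₀, c.P n₀) ≤ l := by
    rintro l ⟨hl0, v, hli, hmem'⟩
    have hx : (((v default).1 : ℝ), ((v default).2 : ℝ)) ≠ 0 :=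
      linearIndependent_unique_iff.1 hli
    rcases eq_or_lt_of_le hl0 with rfl | hl
    · exfalso
      have hbody : (body c.ξ q).Nonempty := by
        refine ⟨(0, 0), ?_⟩
        simp only [body, Set.mem_setOf_eq, abs_zero, zero_mul, sub_zero]
        exact ⟨(Real.exp_pos _).le, (Real.exp_pos _).le⟩
      have hm := hmem' default
      rw [Set.zero_smul_set hbody] at hm
      exact hx (Set.mem_zero.1 hm)
    · have hxz : v default ≠ 0 := by
        intro h; apply hx; rw [h]; simp
      have hFx : cf12_F c q (v default) ≤ l := (cf12_memsmul c q hl _).1 (hmem' default)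
      obtain ⟨n, hn0, hns, hkey⟩ := cf12_key c q hq (v default) hxz
      exact le_trans (hmin n hn0 hns) (le_trans hkey hFx)
  have hlam : lam c.ξ q 1 = cf12_F c q (c.Q n₀, c.P n₀) := by
    apply le_antisymm
    · exact csInf_le ⟨0, fun l hl => hl.1⟩ hmem
    · exact le_csInf ⟨_, hmem⟩ hlow
  constructor
  · exact ⟨n₀, h00, h0s, by rw [LL, hlam]; rfl⟩
  · rintro vv ⟨n, hn0, hns, rfl⟩
    show LL c.ξ 1 q ≤ Lx c.ξ (c.Q n, c.P n) q
    rw [LL, hlam]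
    exact Real.log_le_log hF₀pos (hmin n hn0 hns)
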